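/- Let z ↦ u(z) = σ(Wz + b) be one MLP layer (σ C², applied elementwise), and let g_j ∈ ℝ^r denote given vectors for j = 1,…,n with the property that L∇u_i = ∑_j σ'((Wz+b)_i) W_{ij} g_j =: h_i. Then for each output index i, ∑_{j,l} (∂²u_i/∂z_j∂z_l) g_jᵀ D g_l = (σ''((Wz+b)_i)/σ'((Wz+b)_i)²) · h_iᵀ D h_i, provided σ'((Wz+b)_i) ≠ 0. -/

import Mathlib

open Matrix

/-- Partial derivative in the j-th coordinate direction. -/
noncomputable def pd {n : ℕ} (j : Fin n) (f : (Fin n → ℝ) → ℝ) : (Fin n → ℝ) → ℝ :=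
  fun z => fderiv ℝ f z (Pi.single j 1)

lemma pd_comp_affine {n m : ℕ} (g : ℝ → ℝ) (hg : Differentiable ℝ g)
    (W : Matrix (Fin m) (Fin n) ℝ) (b : Fin m → ℝ) (i : Fin m) (j : Fin n) (z : Fin n → ℝ) :
    pd j (fun z' => g (W.mulVec z' i + b i)) z = deriv g (W.mulVec z i + b i) * W i j := by
  set L : (Fin n → ℝ) →L[ℝ] ℝ :=
    (ContinuousLinearMap.proj (R := ℝ) (φ := fun _ : Fin m => ℝ) i).comp
      (LinearMap.toContinuousLinearMap W.mulVecLin) with hLdef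
  have hL : HasFDerivAt (fun z' : Fin n → ℝ => W.mulVec z' i + b i) L z :=
    L.hasFDerivAt.add_const (b i)
  have hg' : HasDerivAt g (deriv g (W.mulVec z i + b i)) (W.mulVec z i + b i) :=
    (hg _).hasDerivAt
  have hcomp := hg'.comp_hasFDerivAt z hL
  have : pd j (fun z' => g (W.mulVec z' i + b i)) z
      = (deriv g (W.mulVec z i + b i) • L) (Pi.single j 1) := by
    unfold pd; rw [show (fun z' => g ((W *ᵥ z') i + b i)) = (g ∘ fun z' => (W *ᵥ z') i + b i) from rfl, hcomp.fderiv]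
  rw [this]
  simp [hLdef, Matrix.mulVec_single]

lemma sum_dotProduct' {ι : Type*} {r : ℕ} (s : Finset ι) (f : ι → Fin r → ℝ) (w : Fin r → ℝ) :
    (∑ j ∈ s, f j) ⬝ᵥ w = ∑ j ∈ s, f j ⬝ᵥ w := by
  simp only [dotProduct, Finset.sum_apply, Finset.sum_mul]
  exact Finset.sum_comm

lemma dotProduct_sum' {ι : Type*} {r : ℕ} (s : Finset ι) (w : Fin r → ℝ) (f : ι → Fin r → ℝ) :
    w ⬝ᵥ (∑ j ∈ s, f j) = ∑ j ∈ s, w ⬝ᵥ f j := by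
  simp only [dotProduct, Finset.sum_apply, Finset.mul_sum]
  exact Finset.sum_comm

lemma mulVec_sum' {ι : Type*} {r : ℕ} (s : Finset ι) (D : Matrix (Fin r) (Fin r) ℝ)
    (f : ι → Fin r → ℝ) : D.mulVec (∑ j ∈ s, f j) = ∑ j ∈ s, D.mulVec (f j) := by
  funext t
  simp only [Matrix.mulVec, dotProduct, Finset.sum_apply, Finset.mul_sum]
  exact Finset.sum_comm


/-- MLP-layer quadratic-form identity: with u_i(z) = σ((Wz+b)_i),
g_j ∈ ℝ^r given vectors, D diagonal, and h_i = σ'((Wz+b)_i) ∑_j W_{ij} g_j,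
one has ∑_{j,l} ∂²u_i/∂z_j∂z_l · g_jᵀ D g_l = (σ''/σ'²)((Wz+b)_i) · h_iᵀ D h_i,
provided σ'((Wz+b)_i) ≠ 0. -/
theorem mlp_layer_quadratic_form (n m r : ℕ) (σ : ℝ → ℝ) (hσ : ContDiff ℝ 2 σ)
    (W : Matrix (Fin m) (Fin n) ℝ) (b : Fin m → ℝ) (z : Fin n → ℝ)
    (D : Matrix (Fin r) (Fin r) ℝ) (hD : D.IsDiag)
    (g : Fin n → Fin r → ℝ) (i : Fin m)
    (h : Fin r → ℝ)
    (hh : h = fun t => deriv σ (W.mulVec z i + b i) * ∑ j, W i j * g j t)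
    (hσ' : deriv σ (W.mulVec z i + b i) ≠ 0) :
    ∑ j, ∑ l, pd j (pd l (fun z' => σ (W.mulVec z' i + b i))) z *
        (g j ⬝ᵥ D.mulVec (g l)) =
      (deriv (deriv σ) (W.mulVec z i + b i) / (deriv σ (W.mulVec z i + b i)) ^ 2) *
        (h ⬝ᵥ D.mulVec h) := by
  have hdσ : Differentiable ℝ σ := hσ.differentiable (by norm_num)
  have hdσ' : Differentiable ℝ (deriv σ) := by
    have h1 := (contDiff_succ_iff_deriv (n := 1)).mp (by exact_mod_cast hσ)
    exact h1.2.2.differentiable one_ne_zero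
  set x := W.mulVec z i + b i with hx
  have hpd : ∀ j l : Fin n, pd j (pd l (fun z' => σ (W.mulVec z' i + b i))) z
      = deriv (deriv σ) x * W i l * W i j := by
    intro j l
    have e1 : pd l (fun z' => σ (W.mulVec z' i + b i))
        = fun z' => deriv σ (W.mulVec z' i + b i) * W i l :=
      funext fun z' => pd_comp_affine σ hdσ W b i l z'
    rw [e1]
    have e2 : pd j (fun z' => deriv σ (W.mulVec z' i + b i) * W i l) z
        = deriv (fun y => deriv σ y * W i l) x * W i j :=
      pd_comp_affine (fun y => deriv σ y * W i l) (hdσ'.mul_const _) W b i j z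
    rw [e2, deriv_mul_const (hdσ' x)]
  simp only [hpd]
  set v : Fin r → ℝ := fun t => ∑ j, W i j * g j t with hv
  have hhv : h = deriv σ x • v := by
    funext t; simp [hh, hv]
  have hq : h ⬝ᵥ D.mulVec h = (deriv σ x) ^ 2 * (v ⬝ᵥ D.mulVec v) := by
    rw [hhv, smul_dotProduct, Matrix.mulVec_smul, dotProduct_smul, smul_eq_mul, smul_eq_mul]
    ring
  have hv2 : v = ∑ j, W i j • g j := by
    funext t; simp [hv, Finset.sum_apply]
  have hvq : v ⬝ᵥ D.mulVec v = ∑ j, ∑ l, W i j * W i l * (g j ⬝ᵥ D.mulVec (g l)) := by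
    rw [hv2, sum_dotProduct']
    refine Finset.sum_congr rfl fun j _ => ?_
    rw [show D.mulVec (∑ l, W i l • g l) = ∑ l, W i l • D.mulVec (g l) by
      rw [mulVec_sum']; exact Finset.sum_congr rfl fun l _ => Matrix.mulVec_smul D (W i l) (g l),
      dotProduct_sum']
    refine Finset.sum_congr rfl fun l _ => ?_
    rw [smul_dotProduct, dotProduct_smul, smul_eq_mul, smul_eq_mul]
    ring
  rw [hq, hvq]
  rw [show deriv (deriv σ) x / deriv σ x ^ 2 *
      (deriv σ x ^ 2 * ∑ j, ∑ l, W i j * W i l * (g j ⬝ᵥ D.mulVec (g l)))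
      = deriv (deriv σ) x * ∑ j, ∑ l, W i j * W i l * (g j ⬝ᵥ D.mulVec (g l)) by
    field_simp]
  rw [Finset.mul_sum]
  refine Finset.sum_congr rfl fun j _ => ?_
  rw [Finset.mul_sum]
  refine Finset.sum_congr rfl fun l _ => ?_
  ring
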